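/- Real numbers a_0, a_1, a_2, a_3 satisfy the three equations a_0² + a_1² + a_2² + a_3² = 1, a_0·a_2 + a_1·a_3 = 0, and a_0 + a_1 + a_2 + a_3 = √2 if and only if there exists θ ∈ ℝ such that a_0 = (1 − cos θ + sin θ)/(2√2), a_1 = (1 − cos θ − sin θ)/(2√2), a_2 = (1 + cos θ − sin θ)/(2√2), a_3 = (1 + cos θ + sin θ)/(2√2). -/

import Mathlib

theorem stmt_2 (a₀ a₁ a₂ a₃ : ℝ) :
    (a₀ ^ 2 + a₁ ^ 2 + a₂ ^ 2 + a₃ ^ 2 = 1 ∧ a₀ * a₂ + a₁ * a₃ = 0 ∧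
        a₀ + a₁ + a₂ + a₃ = Real.sqrt 2) ↔
      ∃ θ : ℝ,
        a₀ = (1 - Real.cos θ + Real.sin θ) / (2 * Real.sqrt 2) ∧
        a₁ = (1 - Real.cos θ - Real.sin θ) / (2 * Real.sqrt 2) ∧
        a₂ = (1 + Real.cos θ - Real.sin θ) / (2 * Real.sqrt 2) ∧
        a₃ = (1 + Real.cos θ + Real.sin θ) / (2 * Real.sqrt 2) := by
  have hs2 : Real.sqrt 2 ^ 2 = 2 := Real.sq_sqrt (by norm_num)
  have hs2pos : (0:ℝ) < Real.sqrt 2 := Real.sqrt_pos.2 (by norm_num)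
  have hs2ne : Real.sqrt 2 ≠ 0 := ne_of_gt hs2pos
  constructor
  · rintro ⟨h1, h2, h3⟩
    have hpq : a₀ + a₂ = a₁ + a₃ := by nlinarith [sq_nonneg (a₀ + a₂ - a₁ - a₃)]
    set c : ℝ := (a₂ + a₃ - a₀ - a₁) / Real.sqrt 2 with hc
    set s : ℝ := (a₀ - a₁ - a₂ + a₃) / Real.sqrt 2 with hsdef
    have hcs : c ^ 2 + s ^ 2 = 1 := by
      rw [hc, hsdef]
      rw [div_pow, div_pow, ← add_div]
      rw [div_eq_one_iff_eq (by positivity)]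
      nlinarith
    have hc1 : c ≤ 1 := by nlinarith [sq_nonneg s]
    have hc1' : -1 ≤ c := by nlinarith [sq_nonneg s]
    have habs : |s| = Real.sqrt (1 - c ^ 2) := by
      rw [← Real.sqrt_sq_eq_abs]
      congr 1
      linarith
    have key : ∀ θ : ℝ, Real.cos θ = c → Real.sin θ = s →
        a₀ = (1 - Real.cos θ + Real.sin θ) / (2 * Real.sqrt 2) ∧
        a₁ = (1 - Real.cos θ - Real.sin θ) / (2 * Real.sqrt 2) ∧
        a₂ = (1 + Real.cos θ - Real.sin θ) / (2 * Real.sqrt 2) ∧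
        a₃ = (1 + Real.cos θ + Real.sin θ) / (2 * Real.sqrt 2) := by
      intro θ hco hsi
      rw [hco, hsi, hc, hsdef]
      have hm : Real.sqrt 2 * Real.sqrt 2 = 2 := Real.mul_self_sqrt (by norm_num)
      refine ⟨?_, ?_, ?_, ?_⟩ <;> rw [eq_div_iff (by positivity)] <;> field_simp
      · linear_combination 2 * a₀ * hm + h3 + hpq
      · linear_combination 2 * a₁ * hm + h3 - hpq
      · linear_combination 2 * a₂ * hm + h3 + hpq
      · linear_combination 2 * a₃ * hm + h3 - hpq
    rcases le_or_gt 0 s with h | h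
    · exact ⟨Real.arccos c, key _ (Real.cos_arccos hc1' hc1)
        (by rw [Real.sin_arccos, ← habs, abs_of_nonneg h])⟩
    · refine ⟨-Real.arccos c, key _ ?_ ?_⟩
      · rw [Real.cos_neg]; exact Real.cos_arccos hc1' hc1
      · rw [Real.sin_neg, Real.sin_arccos, ← habs, abs_of_neg h]; ring
  · rintro ⟨θ, h0, h1, h2, h3⟩
    have pyth := Real.sin_sq_add_cos_sq θ
    subst h0 h1 h2 h3
    refine ⟨?_, ?_, ?_⟩
    · rw [div_pow, div_pow, div_pow, div_pow, ← add_div, ← add_div,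
        ← add_div, div_eq_one_iff_eq (by positivity)]
      nlinarith
    · rw [div_mul_div_comm, div_mul_div_comm, ← add_div,
        div_eq_zero_iff]
      left; nlinarith
    · rw [← add_div, ← add_div, ← add_div,
        div_eq_iff (by positivity)]
      nlinarith
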